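/- (Lagrange–Jacobi identity, energy form) Along any solution of the Newtonian N-body problem on an interval J with (constant) total energy h = T(t) − U(t), the moment of inertia satisfies Ï(t) = T(t) + h = U(t) + 2h for all t ∈ J. -/

import Mathlib

open Finset in
private lemma lj_swap {N : ℕ} (f : Fin N → Fin N → ℝ) :
    ∑ j, ∑ k ∈ univ.erase j, f j k = ∑ j, ∑ k ∈ univ.erase j, f k j :=
  Finset.sum_comm' (fun x y => by simp [Finset.mem_erase, eq_comm, and_comm, ne_comm])

open Finset in
private lemma lj_double {N : ℕ} (g : Fin N → Fin N → ℝ) (hg : ∀ j k, g j k = g k j) :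
    ∑ j, ∑ k ∈ univ.erase j, g j k
      = 2 * ∑ j, ∑ k ∈ univ.filter (fun k => j < k), g j k := by
  have split : ∀ j : Fin N, ∑ k ∈ univ.erase j, g j k
      = (∑ k ∈ univ.filter (fun k => j < k), g j k)
        + ∑ k ∈ univ.filter (fun k => k < j), g j k := by
    intro j
    rw [← Finset.sum_filter_add_sum_filter_not (univ.erase j) (fun k => j < k)]
    congr 1
    · congr 1
      ext k
      simp only [mem_filter, mem_erase, mem_univ, and_true, true_and]
      exact ⟨fun h => h.2, fun h2 => ⟨ne_of_gt h2, h2⟩⟩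
    · congr 1
      ext k
      simp only [mem_filter, mem_erase, mem_univ, and_true, true_and, not_lt]
      exact ⟨fun h => lt_of_le_of_ne h.2 h.1, fun h2 => ⟨ne_of_lt h2, le_of_lt h2⟩⟩
  have flip : ∑ j, ∑ k ∈ univ.filter (fun k => k < j), g j k
      = ∑ j, ∑ k ∈ univ.filter (fun k => j < k), g j k := by
    rw [Finset.sum_comm' (t' := univ) (s' := fun k => univ.filter (fun j => k < j))
      (fun x y => by simp)]
    exact Finset.sum_congr rfl fun j _ => Finset.sum_congr rfl fun k _ => hg k j
  simp_rw [split, Finset.sum_add_distrib, flip]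
  ring

open scoped RealInnerProductSpace in
/-- **Lagrange–Jacobi identity, energy form.** Along any solution of the
Newtonian N-body problem on an interval `J` with constant total energy
`h = T - U`, the moment of inertia satisfies `Ï = T + h = U + 2h` on `J`. -/
theorem lagrange_jacobi_energy_form (N : ℕ) (m : Fin N → ℝ) (hm : ∀ j, 0 < m j)
    (G : ℝ) (hG : 0 < G) (J : Set ℝ) (hJ : Convex ℝ J)
    (r v a : Fin N → ℝ → EuclideanSpace ℝ (Fin 3))
    (hrv : ∀ j, ∀ t ∈ J, HasDerivWithinAt (r j) (v j t) J t)
    (hva : ∀ j, ∀ t ∈ J, HasDerivWithinAt (v j) (a j t) J t)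
    (hacont : ∀ j, ContinuousOn (a j) J)
    (hsep : ∀ t ∈ J, ∀ j k, j ≠ k → r j t ≠ r k t)
    (hNewton : ∀ j, ∀ t ∈ J,
      m j • a j t = ∑ k ∈ Finset.univ.erase j,
        (G * m j * m k / ‖r k t - r j t‖ ^ 3) • (r k t - r j t))
    (T U I : ℝ → ℝ)
    (hT : ∀ t, T t = (1 / 2) * ∑ j, m j * ‖v j t‖ ^ 2)
    (hU : ∀ t, U t = ∑ j, ∑ k ∈ Finset.univ.filter (fun k => j < k),
        G * m j * m k / ‖r j t - r k t‖)
    (hI : ∀ t, I t = (1 / 2) * ∑ j, m j * ‖r j t‖ ^ 2)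
    (h : ℝ) (hh : ∀ t ∈ J, T t - U t = h)
    (I' : ℝ → ℝ) (hI' : ∀ t ∈ J, HasDerivWithinAt I (I' t) J t) :
    ∀ t ∈ J, HasDerivWithinAt I' (T t + h) J t ∧
      HasDerivWithinAt I' (U t + 2 * h) J t := by
  intro t ht
  -- the canonical first derivative of I
  set G1 : ℝ → ℝ := fun s => ∑ j, m j * ⟪r j s, v j s⟫ with hG1def
  have hIe : ∀ s ∈ J, HasDerivWithinAt I (G1 s) J s := by
    intro s hs
    have hj : HasDerivWithinAt (fun u => (1/2) * ∑ j, m j * ⟪r j u, r j u⟫)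
        ((1/2) * ∑ j, m j * (⟪r j s, v j s⟫ + ⟪v j s, r j s⟫)) J s := by
      refine HasDerivWithinAt.const_mul _ (HasDerivWithinAt.fun_sum fun j _ => ?_)
      exact ((hrv j s hs).inner ℝ (hrv j s hs)).const_mul _
    have e1 : ∀ u, I u = (1/2) * ∑ j, m j * ⟪r j u, r j u⟫ := fun u => by
      rw [hI u]; simp only [real_inner_self_eq_norm_sq]
    have e2 : (1/2) * (∑ j, m j * (⟪r j s, v j s⟫ + ⟪v j s, r j s⟫)) = G1 s := by
      rw [hG1def]
      simp only [real_inner_comm (v _ s) (r _ s)]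
      rw [Finset.mul_sum]
      exact Finset.sum_congr rfl fun j _ => by ring
    exact e2 ▸ (hj.congr (fun u _ => e1 u) (e1 s))
  -- the derivative of G1
  have hG1d : HasDerivWithinAt G1 (∑ j, m j * (⟪r j t, a j t⟫ + ⟪v j t, v j t⟫)) J t := by
    refine HasDerivWithinAt.fun_sum fun j _ => ?_
    exact ((hrv j t ht).inner ℝ (hva j t ht)).const_mul _
  -- the value of the second derivative is 2T - U
  have hval : ∑ j, m j * (⟪r j t, a j t⟫ + ⟪v j t, v j t⟫) = 2 * T t - U t := by
    have hsplit : ∑ j, m j * (⟪r j t, a j t⟫ + ⟪v j t, v j t⟫)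
        = (∑ j, m j * ⟪r j t, a j t⟫) + ∑ j, m j * ‖v j t‖ ^ 2 := by
      rw [← Finset.sum_add_distrib]
      refine Finset.sum_congr rfl fun j _ => ?_
      rw [real_inner_self_eq_norm_sq]; ring
    have hkin : ∑ j, m j * ‖v j t‖ ^ 2 = 2 * T t := by rw [hT t]; ring
    have hpot : ∑ j, m j * ⟪r j t, a j t⟫ = - U t := by
      have hterm : ∀ j, m j * ⟪r j t, a j t⟫
          = ∑ k ∈ Finset.univ.erase j,
              (G * m j * m k / ‖r k t - r j t‖ ^ 3) * ⟪r j t, r k t - r j t⟫ := by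
        intro j
        rw [← real_inner_smul_right, hNewton j t ht, inner_sum]
        exact Finset.sum_congr rfl fun k _ => real_inner_smul_right _ _ _
      set f : Fin N → Fin N → ℝ := fun j k =>
        (G * m j * m k / ‖r k t - r j t‖ ^ 3) * ⟪r j t, r k t - r j t⟫ with hfdef
      have hS : ∑ j, m j * ⟪r j t, a j t⟫ = ∑ j, ∑ k ∈ Finset.univ.erase j, f j k :=
        Finset.sum_congr rfl fun j _ => hterm j
      have hpair : ∀ j k : Fin N, j ≠ k →
          f j k + f k j = -(G * m j * m k / ‖r j t - r k t‖) := by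
        intro j k hjk
        have hd : r k t - r j t ≠ 0 := sub_ne_zero.2 (Ne.symm (hsep t ht j k hjk))
        have hnd : (0:ℝ) < ‖r k t - r j t‖ := norm_pos_iff.2 hd
        have hrev : ‖r j t - r k t‖ = ‖r k t - r j t‖ := norm_sub_rev _ _
        have hinner : ⟪r j t, r k t - r j t⟫ + ⟪r k t, r j t - r k t⟫
            = -‖r k t - r j t‖ ^ 2 := by
          have : ⟪r j t - r k t, r k t - r j t⟫
              = ⟪r j t, r k t - r j t⟫ + ⟪r k t, r j t - r k t⟫ := by
            rw [inner_sub_left]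
            have : r j t - r k t = -(r k t - r j t) := by abel
            rw [show ⟪r k t, r k t - r j t⟫ = -⟪r k t, r j t - r k t⟫ by
              rw [← inner_neg_right]; congr 1; abel]
            ring
          rw [← this, show r j t - r k t = -(r k t - r j t) by abel, inner_neg_left,
            real_inner_self_eq_norm_sq]
        rw [hfdef]
        simp only
        rw [hrev]
        have hck : G * m k * m j = G * m j * m k := by ring
        rw [hck, ← mul_add, hinner]
        have hn : ‖r k t - r j t‖ ≠ 0 := ne_of_gt hnd
        field_simp
      have h2S : (∑ j, ∑ k ∈ Finset.univ.erase j, f j k)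
            + ∑ j, ∑ k ∈ Finset.univ.erase j, f j k
          = ∑ j, ∑ k ∈ Finset.univ.erase j,
              -(G * m j * m k / ‖r j t - r k t‖) := by
        nth_rewrite 1 [lj_swap f]
        rw [← Finset.sum_add_distrib]
        refine Finset.sum_congr rfl fun j _ => ?_
        rw [← Finset.sum_add_distrib]
        refine Finset.sum_congr rfl fun k hk => ?_
        have hjk : j ≠ k := (Finset.mem_erase.1 hk).1.symm
        exact (add_comm (f k j) (f j k)).trans (hpair j k hjk)
      have hUfull : ∑ j, ∑ k ∈ Finset.univ.erase j,
          (G * m j * m k / ‖r j t - r k t‖) = 2 * U t := by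
        rw [hU t]
        exact lj_double _ (fun j k => by
          rw [norm_sub_rev]; ring)
      have : (∑ j, ∑ k ∈ Finset.univ.erase j, f j k) * 2 = -(2 * U t) := by
        rw [← hUfull]
        rw [← Finset.sum_neg_distrib]
        simp_rw [← Finset.sum_neg_distrib]
        rw [← h2S]; ring
      rw [hS]; linarith
    rw [hsplit, hkin, hpot]; ring
  -- dispatch degenerate case
  by_cases hsub : J.Subsingleton
  · have triv : ∀ c : ℝ, HasDerivWithinAt I' c J t := by
      intro c
      rw [hasDerivWithinAt_iff_tendsto_slope]
      have he : J \ {t} = ∅ := by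
        ext x
        simp only [Set.mem_diff, Set.mem_singleton_iff, Set.mem_empty_iff_false, iff_false,
          not_and, not_not]
        exact fun hx => hsub hx ht
      rw [he, nhdsWithin_empty]
      exact Filter.tendsto_bot
    exact ⟨triv _, triv _⟩
  · rw [Set.not_subsingleton_iff] at hsub
    obtain ⟨x, hx, y, hy, hxy⟩ := hsub
    have hne : (interior J).Nonempty := by
      rcases lt_or_gt_of_ne hxy with hlt | hlt
      · refine ⟨(x + y) / 2, ?_⟩
        have : Set.Ioo x y ⊆ interior J :=
          (IsOpen.subset_interior_iff isOpen_Ioo).2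
            ((Set.Ioo_subset_Icc_self).trans (hJ.ordConnected.out hx hy))
        exact this ⟨by linarith, by linarith⟩
      · refine ⟨(x + y) / 2, ?_⟩
        have : Set.Ioo y x ⊆ interior J :=
          (IsOpen.subset_interior_iff isOpen_Ioo).2
            ((Set.Ioo_subset_Icc_self).trans (hJ.ordConnected.out hy hx))
        exact this ⟨by linarith, by linarith⟩
    have hud : UniqueDiffOn ℝ J := uniqueDiffOn_convex hJ hne
    have heq : ∀ s ∈ J, I' s = G1 s := fun s hs =>
      ((hI' s hs).derivWithin (hud s hs)).symm.trans ((hIe s hs).derivWithin (hud s hs))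
    have hdI' : HasDerivWithinAt I' (2 * T t - U t) J t :=
      (hval ▸ hG1d).congr heq (heq t ht)
    have hht := hh t ht
    constructor
    · convert hdI' using 1; linarith
    · convert hdI' using 1; linarith
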